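/- Let U be an open set in ℝⁿ and F = (F₁,…,Fₙ) a vector field on U that is differentiable at a point p ∈ U (and continuous on U). Then the flux interval function Φ(Q) = flux of F through ∂Q with outward normal has density (D₁F₁ + ⋯ + DₙFₙ)(p) at p: for closed axis-parallel cubes Q ⊂ U containing p of side δ, Φ(Q) = (Σᵢ DᵢFᵢ)(p)·m(Q) + o(m(Q)) as δ → 0. -/

import Mathlib

open MeasureTheory

/-- The flux of a vector field `F` through the boundary of the closed axis-parallel box
`∏ⱼ [aⱼ, bⱼ] ⊆ ℝⁿ⁺¹` oriented with the outward normal: the sum over the `n+1` pairs of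
opposite faces of the integral of the corresponding component of `F` over the top face
(`xⱼ = bⱼ`) minus that over the bottom face (`xⱼ = aⱼ`), each face integral being taken
with respect to `n`-dimensional Lebesgue measure. -/
noncomputable def boxFlux {n : ℕ} (F : (Fin (n + 1) → ℝ) → (Fin (n + 1) → ℝ))
    (a b : Fin (n + 1) → ℝ) : ℝ :=
  ∑ j : Fin (n + 1),
    ((∫ x in Set.Icc (a ∘ j.succAbove) (b ∘ j.succAbove), F (j.insertNth (b j) x) j) -
     (∫ x in Set.Icc (a ∘ j.succAbove) (b ∘ j.succAbove), F (j.insertNth (a j) x) j))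

/-- Let `F` be a vector field on an open set `U ⊆ ℝⁿ⁺¹`, continuous on `U` and
differentiable at `p ∈ U` with derivative `F'`. Then the flux interval function
`Φ(Q) = flux of F through ∂Q` has density `(Σᵢ DᵢFᵢ)(p)` at `p`: for every `ε > 0`
there is `τ > 0` such that `|Φ(Q)/m(Q) − (Σᵢ DᵢFᵢ)(p)| ≤ ε` for every closed
axis-parallel cube `Q ⊆ U` containing `p` of side at most `τ`. -/
theorem boxFlux_hasDensity_divergence {n : ℕ}
    (U : Set (Fin (n + 1) → ℝ)) (hU : IsOpen U)
    (F : (Fin (n + 1) → ℝ) → (Fin (n + 1) → ℝ))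
    (hFc : ContinuousOn F U)
    (p : Fin (n + 1) → ℝ) (hp : p ∈ U)
    (F' : (Fin (n + 1) → ℝ) →L[ℝ] (Fin (n + 1) → ℝ))
    (hFd : HasFDerivAt F F' p) :
    ∀ ε > 0, ∃ τ > 0, ∀ (a : Fin (n + 1) → ℝ) (δ : ℝ), 0 < δ → δ ≤ τ →
      p ∈ Set.Icc a (fun i => a i + δ) → Set.Icc a (fun i => a i + δ) ⊆ U →
      |boxFlux F a (fun i => a i + δ) /
          (volume (Set.Icc a (fun i => a i + δ))).toReal -
        ∑ i, F' (Pi.single i 1) i| ≤ ε := by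
  intro ε hε
  set c : ℝ := ε / (2 * (n + 1) + 1) with hc_def
  have hc : (0:ℝ) < c := by positivity
  have hlo := hFd.isLittleO.def hc
  rw [Metric.eventually_nhds_iff] at hlo
  obtain ⟨r, hr, hball⟩ := hlo
  refine ⟨r / 2, by positivity, fun a δ hδ hδτ hpQ hQU => ?_⟩
  set b : Fin (n + 1) → ℝ := fun i => a i + δ with hb
  set G : (Fin (n + 1) → ℝ) → (Fin (n + 1) → ℝ) :=
    fun y => F y - F p - F' (y - p) with hG
  have hab : a ≤ b := fun i => by simp [hb]; linarith
  -- every point of the cube is δ-close to p in the sup norm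
  have hnear : ∀ y ∈ Set.Icc a b, ‖y - p‖ ≤ δ := by
    intro y hy
    rw [pi_norm_le_iff_of_nonneg hδ.le]
    intro i
    have h1 := hy.1 i; have h2 := hy.2 i
    have h3 := hpQ.1 i; have h4 := hpQ.2 i
    simp only [hb] at h2 h4
    rw [Pi.sub_apply, Real.norm_eq_abs, abs_le]
    constructor <;> linarith
  have hGbound : ∀ y ∈ Set.Icc a b, ‖G y‖ ≤ c * δ := by
    intro y hy
    have hdist : dist y p < r := by
      rw [dist_eq_norm]
      calc ‖y - p‖ ≤ δ := hnear y hy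
        _ ≤ r / 2 := hδτ
        _ < r := by linarith
    calc ‖G y‖ ≤ c * ‖y - p‖ := hball hdist
      _ ≤ c * δ := by
          have := hnear y hy
          nlinarith
  -- G is continuous on U
  have hGc : ContinuousOn G U := by
    refine (hFc.sub continuousOn_const).sub ?_
    exact (F'.continuous.comp (continuous_id.sub continuous_const)).continuousOn
  -- faces
  have hvolQ : (volume (Set.Icc a b)).toReal = δ ^ (n + 1) := by
    rw [Real.volume_Icc_pi_toReal hab]
    simp [hb]
  have key : ∀ j : Fin (n + 1),
      ((∫ x in Set.Icc (a ∘ j.succAbove) (b ∘ j.succAbove), F (j.insertNth (b j) x) j) -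
       (∫ x in Set.Icc (a ∘ j.succAbove) (b ∘ j.succAbove), F (j.insertNth (a j) x) j))
      = ((∫ x in Set.Icc (a ∘ j.succAbove) (b ∘ j.succAbove), G (j.insertNth (b j) x) j) -
         (∫ x in Set.Icc (a ∘ j.succAbove) (b ∘ j.succAbove), G (j.insertNth (a j) x) j))
        + F' (Pi.single j 1) j * δ ^ (n + 1) := by
    intro j
    set s : Set (Fin n → ℝ) := Set.Icc (a ∘ j.succAbove) (b ∘ j.succAbove) with hs
    have hsab : a ∘ j.succAbove ≤ b ∘ j.succAbove := fun i => hab _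
    have hvols : (volume s).toReal = δ ^ n := by
      rw [hs, Real.volume_Icc_pi_toReal hsab]
      simp [hb]
    have hmem : ∀ (t : ℝ), t ∈ Set.Icc (a j) (b j) → ∀ x ∈ s,
        j.insertNth t x ∈ Set.Icc a b := fun t ht x hx =>
      Fin.insertNth_mem_Icc.2 ⟨ht, hx⟩
    have haj : a j ∈ Set.Icc (a j) (b j) := ⟨le_refl _, hab j⟩
    have hbj : b j ∈ Set.Icc (a j) (b j) := ⟨hab j, le_refl _⟩
    -- integrability of the pieces
    have hinsc : ∀ t : ℝ, Continuous (fun x : Fin n → ℝ => (Fin.insertNth (α := fun _ => ℝ) j t x)) :=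
      fun t => continuous_const.finInsertNth j continuous_id
    have hGint : ∀ (t : ℝ), t ∈ Set.Icc (a j) (b j) →
        IntegrableOn (fun x => G (j.insertNth t x) j) s := by
      intro t ht
      refine ContinuousOn.integrableOn_compact isCompact_Icc ?_
      refine (continuous_apply j).comp_continuousOn ?_
      refine hGc.comp ((hinsc t).continuousOn) ?_
      exact fun x hx => hQU (hmem t ht x hx)
    have hAint : ∀ (t : ℝ),
        IntegrableOn (fun x => F p j + F' (j.insertNth t x - p) j) s := by
      intro t
      refine ContinuousOn.integrableOn_compact isCompact_Icc ?_
      refine Continuous.continuousOn ?_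
      refine continuous_const.add ?_
      exact (continuous_apply j).comp
        (F'.continuous.comp ((hinsc t).sub continuous_const))
    have hsplit : ∀ (t : ℝ), t ∈ Set.Icc (a j) (b j) →
        (∫ x in s, F (j.insertNth t x) j)
          = (∫ x in s, G (j.insertNth t x) j)
            + ∫ x in s, (F p j + F' (j.insertNth t x - p) j) := by
      intro t ht
      rw [← integral_add (hGint t ht) (hAint t)]
      refine setIntegral_congr_fun measurableSet_Icc fun x _ => ?_
      simp only [hG, Pi.sub_apply]
      ring
    have hdiffconst : ∀ x : Fin n → ℝ,
        (F p j + F' (j.insertNth (b j) x - p) j) - (F p j + F' (j.insertNth (a j) x - p) j)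
          = δ * F' (Pi.single j 1) j := by
      intro x
      set v : Fin (n + 1) → ℝ := δ • (Pi.single j 1 : Fin (n + 1) → ℝ) with hv
      have h1 : (Fin.insertNth (α := fun _ => ℝ) j (b j) x)
            - (Fin.insertNth (α := fun _ => ℝ) j (a j) x) = v := by
        funext k
        refine Fin.succAboveCases j ?_ ?_ k
        · simp [hv, hb]
        · intro i
          simp [hv, Pi.single_eq_of_ne (j.succAbove_ne i)]
      have h2 : F' (j.insertNth (b j) x - p) - F' (j.insertNth (a j) x - p) = F' v := by
        rw [← map_sub]
        congr 1
        rw [← h1]; abel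
      have h3 := congrArg (fun w => w j) h2
      have h4 : F' v j = δ * F' (Pi.single j 1) j := by
        rw [hv, _root_.map_smul]
        simp
      simp only [Pi.sub_apply] at h3
      rw [h4] at h3
      linarith
    rw [hsplit _ hbj, hsplit _ haj]
    have : (∫ x in s, (F p j + F' (j.insertNth (b j) x - p) j))
        - (∫ x in s, (F p j + F' (j.insertNth (a j) x - p) j))
        = δ * F' (Pi.single j 1) j * δ ^ n := by
      rw [← integral_sub (hAint (b j)) (hAint (a j))]
      rw [setIntegral_congr_fun measurableSet_Icc (fun x _ => hdiffconst x)]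
      rw [setIntegral_const, smul_eq_mul, measureReal_def, hvols]
      ring
    rw [show δ ^ (n+1) = δ * δ ^ n by ring]
    linarith [this]
  -- bound on the G-integrals
  have hGintbound : ∀ j : Fin (n + 1), ∀ (t : ℝ), t ∈ Set.Icc (a j) (b j) →
      |∫ x in Set.Icc (a ∘ j.succAbove) (b ∘ j.succAbove), G (j.insertNth t x) j|
        ≤ c * δ * δ ^ n := by
    intro j t ht
    set s : Set (Fin n → ℝ) := Set.Icc (a ∘ j.succAbove) (b ∘ j.succAbove) with hs
    have hsab : a ∘ j.succAbove ≤ b ∘ j.succAbove := fun i => hab _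
    have hvols : (volume s).toReal = δ ^ n := by
      rw [hs, Real.volume_Icc_pi_toReal hsab]
      simp [hb]
    have hfin : volume s < ⊤ := isCompact_Icc.measure_lt_top
    have hinsc : Continuous (fun x : Fin n → ℝ => (Fin.insertNth (α := fun _ => ℝ) j t x)) :=
      continuous_const.finInsertNth j continuous_id
    have hcont : ContinuousOn (fun x => G (j.insertNth t x) j) s := by
      refine (continuous_apply j).comp_continuousOn ?_
      refine hGc.comp (hinsc.continuousOn) ?_
      exact fun x hx => hQU (Fin.insertNth_mem_Icc.2 ⟨ht, hx⟩)
    have := norm_setIntegral_le_of_norm_le_const (C := c * δ) (f := fun x => G (j.insertNth t x) j) hfin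
      (fun x hx => ?_)
    · rw [Real.norm_eq_abs] at this
      calc |∫ x in s, G (j.insertNth t x) j| ≤ c * δ * (volume s).toReal := this
        _ = c * δ * δ ^ n := by rw [hvols]
    · calc ‖G (j.insertNth t x) j‖ ≤ ‖G (j.insertNth t x)‖ := norm_le_pi_norm _ j
        _ ≤ c * δ := hGbound _ (Fin.insertNth_mem_Icc.2 ⟨ht, hx⟩)
  -- put everything together
  have hflux : boxFlux F a b
      = (∑ j : Fin (n+1),
          ((∫ x in Set.Icc (a ∘ j.succAbove) (b ∘ j.succAbove), G (j.insertNth (b j) x) j) -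
           (∫ x in Set.Icc (a ∘ j.succAbove) (b ∘ j.succAbove), G (j.insertNth (a j) x) j)))
        + (∑ i : Fin (n+1), F' (Pi.single i 1) i) * δ ^ (n + 1) := by
    rw [boxFlux, Finset.sum_congr rfl (fun j _ => key j), Finset.sum_add_distrib,
      ← Finset.sum_mul]
  have hGsum : |∑ j : Fin (n+1),
      ((∫ x in Set.Icc (a ∘ j.succAbove) (b ∘ j.succAbove), G (j.insertNth (b j) x) j) -
       (∫ x in Set.Icc (a ∘ j.succAbove) (b ∘ j.succAbove), G (j.insertNth (a j) x) j))|
      ≤ (n + 1) * (2 * (c * δ * δ ^ n)) := by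
    calc _ ≤ ∑ j : Fin (n+1),
        |((∫ x in Set.Icc (a ∘ j.succAbove) (b ∘ j.succAbove), G (j.insertNth (b j) x) j) -
          (∫ x in Set.Icc (a ∘ j.succAbove) (b ∘ j.succAbove), G (j.insertNth (a j) x) j))| :=
          Finset.abs_sum_le_sum_abs _ _
      _ ≤ ∑ _j : Fin (n+1), 2 * (c * δ * δ ^ n) := by
          refine Finset.sum_le_sum fun j _ => ?_
          have h1 := hGintbound j (b j) ⟨hab j, le_refl _⟩
          have h2 := hGintbound j (a j) ⟨le_refl _, hab j⟩
          calc |_| ≤ _ := abs_sub _ _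
            _ ≤ 2 * (c * δ * δ ^ n) := by linarith
      _ = (n + 1) * (2 * (c * δ * δ ^ n)) := by
          simp [Finset.sum_const, Finset.card_univ]
  have hδpow : (0:ℝ) < δ ^ (n + 1) := pow_pos hδ _
  rw [hvolQ, hflux]
  rw [add_div, mul_div_assoc, div_self hδpow.ne', mul_one, add_sub_cancel_right]
  rw [abs_div, abs_of_pos hδpow, div_le_iff₀ hδpow]
  calc _ ≤ (n + 1) * (2 * (c * δ * δ ^ n)) := hGsum
    _ = 2 * (n + 1) * c * δ ^ (n + 1) := by ring
    _ ≤ ε * δ ^ (n + 1) := by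
        have hone : 2 * ((n:ℝ) + 1) * c ≤ ε := by
          rw [hc_def]
          have hd : (0:ℝ) < 2 * ((n:ℝ) + 1) + 1 := by positivity
          calc 2 * ((n:ℝ) + 1) * (ε / (2 * ((n:ℝ) + 1) + 1))
              ≤ (2 * ((n:ℝ) + 1) + 1) * (ε / (2 * ((n:ℝ) + 1) + 1)) :=
                mul_le_mul_of_nonneg_right (by linarith) (by positivity)
            _ = ε := by field_simp
        nlinarith [hδpow]
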